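/- Let C be the ternary Cantor set and σ : C → C the backward shift, σ(t) = 3t if t ≤ 1/3 and σ(t) = 3t − 2 if t ≥ 2/3. Then for any pairwise distinct positive integers m_1,…,m_N, the maps σ^{m_1},…,σ^{m_N} are disjoint mixing on C: for all nonempty relatively open sets U_0,U_1,…,U_N ⊆ C, the set { m ∈ ℕ : U_0 ∩ (σ^{m_1})⁻ᵐ(U_1) ∩ … ∩ (σ^{m_N})⁻ᵐ(U_N) ≠ ∅ } is cofinite in ℕ. -/

import Mathlib

-- We use Mathlib's `cantorSet : Set ℝ`, the standard middle-thirds ternary Cantor set.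

/-- Let `σ` be the backward shift on the ternary Cantor set
(`σ t = 3t` if `t ≤ 1/3`, `σ t = 3t - 2` if `t ≥ 2/3`).  Then for pairwise distinct
positive integers `m 1, …, m N`, the maps `σ^[m 1], …, σ^[m N]` are disjoint mixing:
every disjoint return set (for nonempty relatively open subsets of the Cantor set)
is cofinite in `ℕ`. -/
noncomputable def cdig (a : ℕ → Bool) (n : ℕ) : ℝ := (if a n then 2 else 0) / 3 ^ (n + 1)

lemma cdig_nonneg (a : ℕ → Bool) (n : ℕ) : 0 ≤ cdig a n := by
  unfold cdig; positivity

lemma cdig_le (a : ℕ → Bool) (n : ℕ) : cdig a n ≤ (2/3) * (1/3 : ℝ) ^ n := by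
  unfold cdig
  have h3 : (0:ℝ) < 3 ^ (n+1) := by positivity
  rw [div_le_iff₀ h3]
  have : (2/3) * (1/3 : ℝ) ^ n * 3 ^ (n+1) = 2 := by
    rw [pow_succ]; field_simp; rw [← mul_pow]; norm_num
  rw [this]
  split <;> norm_num

lemma summable_cdig (a : ℕ → Bool) : Summable (cdig a) :=
  Summable.of_nonneg_of_le (cdig_nonneg a) (cdig_le a)
    (((summable_geometric_of_lt_one (by norm_num) (by norm_num)).mul_left _))

noncomputable def cval (a : ℕ → Bool) : ℝ := ∑' n, cdig a n

def ctail (a : ℕ → Bool) : ℕ → Bool := fun n => a (n + 1)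

def ccons (b : Bool) (a : ℕ → Bool) : ℕ → Bool := fun n => match n with
  | 0 => b
  | n + 1 => a n

lemma tsum_geom : ∑' n : ℕ, (1/3 : ℝ)^n = 3/2 := by
  rw [tsum_geometric_of_lt_one (by norm_num) (by norm_num)]; norm_num

lemma cval_nonneg (a : ℕ → Bool) : 0 ≤ cval a := tsum_nonneg (cdig_nonneg a)

lemma cval_le_one (a : ℕ → Bool) : cval a ≤ 1 := by
  have := Summable.tsum_le_tsum (cdig_le a) (summable_cdig a)
    ((summable_geometric_of_lt_one (by norm_num) (by norm_num)).mul_left _)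
  rw [tsum_mul_left, tsum_geom] at this
  unfold cval
  linarith

lemma cval_cons (b : Bool) (a : ℕ → Bool) :
    cval (ccons b a) = (if b then 2 else 0) / 3 + cval a / 3 := by
  unfold cval
  rw [Summable.tsum_eq_zero_add (summable_cdig _)]
  have h0 : cdig (ccons b a) 0 = (if b then 2 else 0) / 3 := by
    unfold cdig ccons; norm_num
  have h1 : ∀ n : ℕ, cdig (ccons b a) (n + 1) = (1/3) * cdig a n := by
    intro n
    unfold cdig ccons
    rw [pow_succ]
    ring
  rw [h0]
  congr 1
  simp_rw [h1]
  rw [tsum_mul_left]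
  ring

lemma ccons_head_tail (a : ℕ → Bool) : ccons (a 0) (ctail a) = a := by
  funext n; cases n <;> rfl

lemma cval_shift (a : ℕ → Bool) :
    cval a = (if a 0 then 2 else 0) / 3 + cval (ctail a) / 3 := by
  conv_lhs => rw [← ccons_head_tail a]
  exact cval_cons _ _

lemma cval_mem_pre (n : ℕ) (a : ℕ → Bool) : cval a ∈ preCantorSet n := by
  induction n generalizing a with
  | zero => exact ⟨cval_nonneg a, cval_le_one a⟩
  | succ n ih =>
    rw [preCantorSet_succ]
    cases h : a 0 with
    | false =>
      left
      exact ⟨cval (ctail a), ih _, by rw [cval_shift a, h]; norm_num⟩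
    | true =>
      right
      exact ⟨cval (ctail a), ih _, by rw [cval_shift a, h]; norm_num; ring⟩

lemma cval_mem (a : ℕ → Bool) : cval a ∈ cantorSet :=
  Set.mem_iInter.mpr fun n => cval_mem_pre n a

lemma cval_approx (n : ℕ) : ∀ x ∈ preCantorSet n, ∃ a, |x - cval a| ≤ (1/3 : ℝ)^n := by
  induction n with
  | zero =>
    rintro x ⟨h0, h1⟩
    refine ⟨fun _ => false, ?_⟩
    have : cval (fun _ => false) = 0 := by
      unfold cval cdig; simp
    rw [this]
    rw [abs_sub_le_iff]; constructor <;> simp <;> linarith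
  | succ n ih =>
    rintro x (⟨y, hy, rfl⟩ | ⟨y, hy, rfl⟩)
    · obtain ⟨a, ha⟩ := ih y hy
      refine ⟨ccons false a, ?_⟩
      rw [cval_cons]
      simp only [if_neg Bool.false_ne_true]
      have : y / 3 - (0/3 + cval a / 3) = (y - cval a)/3 := by ring
      rw [this, abs_div, pow_succ]
      rw [abs_of_nonneg (by norm_num : (0:ℝ) ≤ 3)]
      calc |y - cval a| / 3 ≤ (1/3:ℝ)^n / 3 := by linarith [ha]
        _ = (1/3:ℝ)^n * (1/3) := by ring
    · obtain ⟨a, ha⟩ := ih y hy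
      refine ⟨ccons true a, ?_⟩
      rw [cval_cons]
      norm_num
      have : (2 + y) / 3 - (2/3 + cval a / 3) = (y - cval a)/3 := by ring
      rw [this, abs_div, pow_succ]
      rw [abs_of_nonneg (by norm_num : (0:ℝ) ≤ 3)]
      calc |y - cval a| / 3 ≤ (1/3:ℝ)^n / 3 := by linarith [ha]
        _ = (1/3:ℝ)^n * (1/3) := by ring

lemma cval_close (k : ℕ) : ∀ a b : ℕ → Bool, (∀ j < k, b j = a j) →
    |cval b - cval a| ≤ (1/3 : ℝ)^k := by
  induction k with
  | zero =>
    intro a b _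
    rw [pow_zero, abs_sub_le_iff]
    constructor <;> linarith [cval_nonneg a, cval_le_one a, cval_nonneg b, cval_le_one b]
  | succ k ih =>
    intro a b h
    have h0 : b 0 = a 0 := h 0 (Nat.succ_pos k)
    have htail : ∀ j < k, ctail b j = ctail a j := fun j hj => h (j+1) (by omega)
    have := ih (ctail a) (ctail b) htail
    rw [cval_shift a, cval_shift b, h0]
    have heq : (if a 0 then (2:ℝ) else 0) / 3 + cval (ctail b) / 3 -
        ((if a 0 then (2:ℝ) else 0) / 3 + cval (ctail a) / 3)
        = (cval (ctail b) - cval (ctail a)) / 3 := by ring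
    rw [heq, abs_div, abs_of_nonneg (by norm_num : (0:ℝ) ≤ 3), pow_succ]
    calc |cval (ctail b) - cval (ctail a)| / 3 ≤ (1/3:ℝ)^k / 3 := by linarith
      _ = (1/3:ℝ)^k * (1/3) := by ring

noncomputable def CF (a : ℕ → Bool) : cantorSet := ⟨cval a, cval_mem a⟩

lemma sigma_CF (σ : cantorSet → cantorSet)
    (hσ : ∀ t : cantorSet,
      ((t : ℝ) ≤ 1 / 3 → ((σ t : ℝ) = 3 * (t : ℝ))) ∧
      (2 / 3 ≤ (t : ℝ) → ((σ t : ℝ) = 3 * (t : ℝ) - 2)))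
    (a : ℕ → Bool) : σ (CF a) = CF (ctail a) := by
  apply Subtype.ext
  cases h : a 0 with
  | false =>
    have hv : (CF a : ℝ) = cval (ctail a) / 3 := by
      show cval a = _
      rw [cval_shift a, h]; norm_num
    have hle : (CF a : ℝ) ≤ 1/3 := by
      rw [hv]; linarith [cval_le_one (ctail a)]
    rw [(hσ (CF a)).1 hle, hv]
    show _ = cval (ctail a)
    ring
  | true =>
    have hv : (CF a : ℝ) = 2/3 + cval (ctail a) / 3 := by
      show cval a = _
      rw [cval_shift a, h]; norm_num
    have hge : 2/3 ≤ (CF a : ℝ) := by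
      rw [hv]; linarith [cval_nonneg (ctail a)]
    rw [(hσ (CF a)).2 hge, hv]
    show _ = cval (ctail a)
    ring

lemma CF_iter (σ : cantorSet → cantorSet)
    (hσ : ∀ t : cantorSet,
      ((t : ℝ) ≤ 1 / 3 → ((σ t : ℝ) = 3 * (t : ℝ))) ∧
      (2 / 3 ≤ (t : ℝ) → ((σ t : ℝ) = 3 * (t : ℝ) - 2)))
    (k : ℕ) : ∀ a : ℕ → Bool, σ^[k] (CF a) = CF (fun n => a (n + k)) := by
  induction k with
  | zero => intro a; simp
  | succ k ih =>
    intro a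
    rw [Function.iterate_succ_apply, sigma_CF σ hσ a, ih (ctail a)]
    rfl

lemma open_lemma {U : Set cantorSet} (hU : IsOpen U) {x : cantorSet} (hx : x ∈ U) :
    ∃ k, ∃ a : ℕ → Bool, ∀ b, (∀ j < k, b j = a j) → CF b ∈ U := by
  obtain ⟨ε, hε, hball⟩ := Metric.isOpen_iff.mp hU x hx
  obtain ⟨n, hn⟩ := exists_pow_lt_of_lt_one (half_pos hε) (by norm_num : (1/3:ℝ) < 1)
  have hxmem : (x : ℝ) ∈ preCantorSet n := Set.mem_iInter.mp x.2 n
  obtain ⟨a, ha⟩ := cval_approx n (x : ℝ) hxmem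
  refine ⟨n, a, fun b hb => hball ?_⟩
  rw [Metric.mem_ball, Subtype.dist_eq]
  have h1 := cval_close n a b hb
  have h2 : dist (cval b) (x : ℝ) ≤ |cval b - cval a| + |(x:ℝ) - cval a| := by
    rw [Real.dist_eq, abs_sub_comm (x:ℝ) (cval a)]
    exact abs_sub_le _ _ _
  show dist (cval b) (x:ℝ) < ε
  linarith
theorem stmt_9 (σ : cantorSet → cantorSet)
    (hσ : ∀ t : cantorSet,
      ((t : ℝ) ≤ 1 / 3 → ((σ t : ℝ) = 3 * (t : ℝ))) ∧
      (2 / 3 ≤ (t : ℝ) → ((σ t : ℝ) = 3 * (t : ℝ) - 2)))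
    {N : ℕ} (m : Fin N → ℕ) (hpos : ∀ i, 0 < m i) (hinj : Function.Injective m) :
    ∀ (U0 : Set cantorSet) (U : Fin N → Set cantorSet),
      IsOpen U0 → U0.Nonempty → (∀ i, IsOpen (U i)) → (∀ i, (U i).Nonempty) →
      ({n : ℕ | ∃ z ∈ U0, ∀ i, (σ^[m i])^[n] z ∈ U i}ᶜ : Set ℕ).Finite := by
  classical
  intro U0 U hU0open hU0ne hUopen hUne
  obtain ⟨x0, hx0⟩ := hU0ne
  obtain ⟨k0, a0, h0⟩ := open_lemma hU0open hx0
  choose x hx using hUne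
  choose k A hA using fun i => open_lemma (hUopen i) (hx i)
  set K := max k0 (Finset.univ.sup k) with hKdef
  apply Set.Finite.subset (Set.finite_Iio K)
  intro n hn
  simp only [Set.mem_compl_iff, Set.mem_setOf_eq] at hn
  rw [Set.mem_Iio]
  by_contra hnK
  push_neg at hnK
  apply hn
  set b : ℕ → Bool := fun j => if j < K then a0 j else
    if h : ∃ i : Fin N, m i * n ≤ j ∧ j < m i * n + K then
      A h.choose (j - m h.choose * n) else false with hbdef
  refine ⟨CF b, h0 b ?_, ?_⟩
  · intro j hj
    have hjK : j < K := lt_of_lt_of_le hj (le_max_left _ _)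
    simp only [hbdef, if_pos hjK]
  · intro i
    rw [← Function.iterate_mul, CF_iter σ hσ]
    apply hA i
    intro j hj
    have hjK : j < K :=
      lt_of_lt_of_le hj (le_trans (Finset.le_sup (Finset.mem_univ i)) (le_max_right _ _))
    have hmn : n ≤ m i * n := Nat.le_mul_of_pos_left n (hpos i)
    have h1 : ¬ (j + m i * n < K) := by omega
    have hex : ∃ i' : Fin N, m i' * n ≤ j + m i * n ∧ j + m i * n < m i' * n + K :=
      ⟨i, by omega, by omega⟩
    show b (j + m i * n) = A i j
    simp only [hbdef, if_neg h1, dif_pos hex]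
    obtain ⟨hc1, hc2⟩ := hex.choose_spec
    have hci : hex.choose = i := by
      by_contra hne
      have hmne : m hex.choose ≠ m i := fun h => hne (hinj h)
      rcases Nat.lt_or_ge (m hex.choose) (m i) with h' | h'
      · have hmul : (m hex.choose + 1) * n ≤ m i * n := Nat.mul_le_mul_right n (by omega)
        have : m hex.choose * n + n ≤ m i * n := by
          calc m hex.choose * n + n = (m hex.choose + 1) * n := by ring
            _ ≤ m i * n := hmul
        omega
      · have h'' : m i < m hex.choose := by omega
        have hmul : (m i + 1) * n ≤ m hex.choose * n := Nat.mul_le_mul_right n (by omega)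
        have : m i * n + n ≤ m hex.choose * n := by
          calc m i * n + n = (m i + 1) * n := by ring
            _ ≤ m hex.choose * n := hmul
        omega
    rw [hci]
    congr 1
    omega
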